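/- Let ω : ℝ → ℂ be a C² function whose support is a compact subset of [0,∞), and let M > 0. There exists a constant C = C(ω, M) such that for every x ≤ 0 and every C² function g : ℝ → ℂ with |g(μ)|, |g'(μ)|, |g''(μ)| ≤ M for all μ ∈ ℝ, one has ∫_ℝ | x ∫_{−1}^{1} ∫₀^∞ cos(uλ) e^{−iλxσ} ω(λ) g(λσ) dλ dσ | du ≤ C ⟨x⟩. -/

import Mathlib

open MeasureTheory intervalIntegral

open Real Complex FourierTransform in
private lemma osc_bound (h : ℝ → ℂ) (hh : ContDiff ℝ 2 h) (hc : HasCompactSupport h) (a : ℝ) :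
    ‖∫ t : ℝ, Complex.exp (Complex.I * a * t) * h t‖ ≤
      ((∫ t : ℝ, ‖h t‖) + ∫ t : ℝ, ‖deriv (deriv h) t‖) / (1 + a ^ 2) := by
  have hcont := hh.continuous
  have hi : Integrable h := hcont.integrable_of_hasCompactSupport hc
  have hd : Differentiable ℝ h := hh.differentiable two_ne_zero
  have h2 : ContDiff ℝ 1 (deriv h) := by
    have := (contDiff_succ_iff_deriv.mp (show ContDiff ℝ (1 + 1) h by exact_mod_cast hh)).2.2
    exact this
  have hi' : Integrable (deriv h) :=
    (hh.continuous_deriv one_le_two).integrable_of_hasCompactSupport hc.deriv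
  have hi'' : Integrable (deriv (deriv h)) :=
    (h2.continuous_deriv le_rfl).integrable_of_hasCompactSupport hc.deriv.deriv
  set w : ℝ := -a / (2 * π) with hw
  have hπ : (π : ℝ) ≠ 0 := Real.pi_ne_zero
  have key : ∀ f : ℝ → ℂ, 𝓕 f w = ∫ t : ℝ, Complex.exp (Complex.I * a * t) * f t := by
    intro f
    rw [Real.fourier_real_eq_integral_exp_smul]
    congr 1; ext t
    rw [smul_eq_mul]
    congr 1
    have : (-2 * π * t * w : ℝ) = a * t := by rw [hw]; field_simp
    rw [this]
    push_cast; ring_nf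
  have e2 := Real.fourier_deriv hi hd hi'
  have e3 := Real.fourier_deriv hi' (h2.differentiable one_ne_zero) hi''
  have keyh := key h
  have keyh'' := key (deriv (deriv h))
  have identity : (∫ t : ℝ, Complex.exp (Complex.I * a * t) * deriv (deriv h) t) =
      ((2 * π * Complex.I * w) ^ 2) * ∫ t : ℝ, Complex.exp (Complex.I * a * t) * h t := by
    rw [← keyh, ← keyh'']
    have := congrFun e3 w
    rw [this, congrFun e2 w]
    simp [smul_eq_mul]; ring
  have n1 : ‖∫ t : ℝ, Complex.exp (Complex.I * a * t) * h t‖ ≤ ∫ t : ℝ, ‖h t‖ := by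
    calc ‖∫ t : ℝ, Complex.exp (Complex.I * a * t) * h t‖
        ≤ ∫ t : ℝ, ‖Complex.exp (Complex.I * a * t) * h t‖ := norm_integral_le_integral_norm _
      _ = ∫ t : ℝ, ‖h t‖ := by
          congr 1; ext t
          rw [norm_mul]
          have : ‖Complex.exp (Complex.I * a * t)‖ = 1 := by
            rw [Complex.norm_exp]
            simp [mul_comm]
          rw [this, one_mul]
  have n2 : a ^ 2 * ‖∫ t : ℝ, Complex.exp (Complex.I * a * t) * h t‖ ≤
      ∫ t : ℝ, ‖deriv (deriv h) t‖ := by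
    have hnorm : ‖(2 * π * Complex.I * w : ℂ) ^ 2‖ = a ^ 2 := by
      rw [norm_pow]
      simp only [norm_mul, Complex.norm_I, Complex.norm_two, Complex.norm_real, Real.norm_eq_abs]
      rw [hw]
      rw [abs_of_pos Real.pi_pos, abs_div, abs_neg]
      rw [abs_of_pos (by positivity : (0:ℝ) < 2 * π)]
      field_simp
      exact sq_abs a
    calc a ^ 2 * ‖∫ t : ℝ, Complex.exp (Complex.I * a * t) * h t‖
        = ‖((2 * π * Complex.I * w) ^ 2) * ∫ t : ℝ, Complex.exp (Complex.I * a * t) * h t‖ := by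
          rw [norm_mul, hnorm]
      _ = ‖∫ t : ℝ, Complex.exp (Complex.I * a * t) * deriv (deriv h) t‖ := by rw [identity]
      _ ≤ ∫ t : ℝ, ‖Complex.exp (Complex.I * a * t) * deriv (deriv h) t‖ :=
          norm_integral_le_integral_norm _
      _ = ∫ t : ℝ, ‖deriv (deriv h) t‖ := by
          congr 1; ext t
          rw [norm_mul]
          have : ‖Complex.exp (Complex.I * a * t)‖ = 1 := by
            rw [Complex.norm_exp]
            simp [mul_comm]
          rw [this, one_mul]
  rw [le_div_iff₀ (by positivity)]
  calc ‖∫ t : ℝ, Complex.exp (Complex.I * a * t) * h t‖ * (1 + a ^ 2)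
      = ‖∫ t : ℝ, Complex.exp (Complex.I * a * t) * h t‖
        + a ^ 2 * ‖∫ t : ℝ, Complex.exp (Complex.I * a * t) * h t‖ := by ring
    _ ≤ (∫ t : ℝ, ‖h t‖) + ∫ t : ℝ, ‖deriv (deriv h) t‖ := add_le_add n1 n2

private lemma deriv2_formula (ω g : ℝ → ℂ) (hω : ContDiff ℝ 2 ω) (hg : ContDiff ℝ 2 g)
    (σ : ℝ) (t : ℝ) :
    deriv (deriv (fun s => ω s * g (s * σ))) t =
      deriv (deriv ω) t * g (t * σ) + deriv ω t * (deriv g (t * σ) * σ) +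
        (deriv ω t * (deriv g (t * σ) * σ) + ω t * (deriv (deriv g) (t * σ) * σ * σ)) := by
  have hωd : Differentiable ℝ ω := hω.differentiable two_ne_zero
  have hgd : Differentiable ℝ g := hg.differentiable two_ne_zero
  have hω1 : ContDiff ℝ 1 (deriv ω) :=
    (contDiff_succ_iff_deriv.mp (show ContDiff ℝ (1+1) ω by exact_mod_cast hω)).2.2
  have hg1 : ContDiff ℝ 1 (deriv g) :=
    (contDiff_succ_iff_deriv.mp (show ContDiff ℝ (1+1) g by exact_mod_cast hg)).2.2
  have A : ∀ s : ℝ, HasDerivAt (fun s : ℝ => g (s * σ)) (deriv g (s * σ) * σ) s := by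
    intro s
    have h := HasDerivAt.scomp (𝕜 := ℝ) s ((hgd (s * σ)).hasDerivAt) (hasDerivAt_mul_const σ)
    simpa [smul_eq_mul, mul_comm, Function.comp_def] using h
  have A' : ∀ s : ℝ, HasDerivAt (fun s : ℝ => deriv g (s * σ)) (deriv (deriv g) (s * σ) * σ) s := by
    intro s
    have h := HasDerivAt.scomp (𝕜 := ℝ) s
      ((hg1.differentiable one_ne_zero (s * σ)).hasDerivAt) (hasDerivAt_mul_const σ)
    simpa [smul_eq_mul, mul_comm, Function.comp_def] using h
  have B : ∀ s : ℝ, HasDerivAt (fun s => ω s * g (s * σ))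
      (deriv ω s * g (s * σ) + ω s * (deriv g (s * σ) * σ)) s := fun s =>
    ((hωd s).hasDerivAt.mul (A s))
  have d1 : deriv (fun s => ω s * g (s * σ)) =
      fun s => deriv ω s * g (s * σ) + ω s * (deriv g (s * σ) * σ) :=
    funext fun s => (B s).deriv
  rw [d1]
  have C1 : HasDerivAt (fun s => deriv ω s * g (s * σ))
      (deriv (deriv ω) t * g (t * σ) + deriv ω t * (deriv g (t * σ) * σ)) t :=
    ((hω1.differentiable one_ne_zero t).hasDerivAt.mul (A t))
  have C2 : HasDerivAt (fun s => ω s * (deriv g (s * σ) * σ))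
      (deriv ω t * (deriv g (t * σ) * σ) + ω t * (deriv (deriv g) (t * σ) * σ * σ)) t := by
    exact (hωd t).hasDerivAt.mul ((A' t).mul_const (σ : ℂ))
  exact ((C1.add C2)).deriv

private lemma deriv2_bound (ω g : ℝ → ℂ) (hω : ContDiff ℝ 2 ω) (hg : ContDiff ℝ 2 g)
    (M σ : ℝ) (hσ : |σ| ≤ 1) (hM : 0 < M)
    (hgb : ∀ μ : ℝ, ‖g μ‖ ≤ M ∧ ‖deriv g μ‖ ≤ M ∧ ‖deriv (deriv g) μ‖ ≤ M) (t : ℝ) :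
    ‖deriv (deriv (fun s => ω s * g (s * σ))) t‖ ≤
      M * (‖deriv (deriv ω) t‖ + 2 * ‖deriv ω t‖ + ‖ω t‖) := by
  rw [deriv2_formula ω g hω hg σ t]
  obtain ⟨hg0, hg1, hg2⟩ := hgb (t * σ)
  have e1 : ‖deriv (deriv ω) t * g (t * σ)‖ ≤ M * ‖deriv (deriv ω) t‖ := by
    rw [norm_mul, mul_comm]
    exact mul_le_mul_of_nonneg_right hg0 (norm_nonneg _)
  have e2 : ‖deriv ω t * (deriv g (t * σ) * σ)‖ ≤ M * ‖deriv ω t‖ := by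
    rw [norm_mul, norm_mul, mul_comm]
    have : ‖deriv g (t * σ)‖ * ‖(σ : ℂ)‖ ≤ M := by
      rw [Complex.norm_real, Real.norm_eq_abs]
      calc ‖deriv g (t * σ)‖ * |σ| ≤ M * 1 :=
        mul_le_mul hg1 hσ (abs_nonneg _) hM.le
      _ = M := mul_one M
    exact mul_le_mul_of_nonneg_right this (norm_nonneg _)
  have e3 : ‖ω t * (deriv (deriv g) (t * σ) * σ * σ)‖ ≤ M * ‖ω t‖ := by
    rw [norm_mul, norm_mul, norm_mul, mul_comm]
    have : ‖deriv (deriv g) (t * σ)‖ * ‖(σ : ℂ)‖ * ‖(σ : ℂ)‖ ≤ M := by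
      rw [Complex.norm_real, Real.norm_eq_abs]
      calc ‖deriv (deriv g) (t * σ)‖ * |σ| * |σ| ≤ M * 1 * 1 := by
            apply mul_le_mul _ hσ (abs_nonneg _) (by positivity)
            exact mul_le_mul hg2 hσ (abs_nonneg _) hM.le
        _ = M := by ring
    exact mul_le_mul_of_nonneg_right this (norm_nonneg _)
  calc ‖deriv (deriv ω) t * g (t * σ) + deriv ω t * (deriv g (t * σ) * σ) +
        (deriv ω t * (deriv g (t * σ) * σ) + ω t * (deriv (deriv g) (t * σ) * σ * σ))‖
      ≤ ‖deriv (deriv ω) t * g (t * σ) + deriv ω t * (deriv g (t * σ) * σ)‖ +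
        ‖deriv ω t * (deriv g (t * σ) * σ) + ω t * (deriv (deriv g) (t * σ) * σ * σ)‖ :=
        norm_add_le _ _
    _ ≤ (‖deriv (deriv ω) t * g (t * σ)‖ + ‖deriv ω t * (deriv g (t * σ) * σ)‖) +
        (‖deriv ω t * (deriv g (t * σ) * σ)‖ + ‖ω t * (deriv (deriv g) (t * σ) * σ * σ)‖) :=
        add_le_add (norm_add_le _ _) (norm_add_le _ _)
    _ ≤ (M * ‖deriv (deriv ω) t‖ + M * ‖deriv ω t‖) + (M * ‖deriv ω t‖ + M * ‖ω t‖) := by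
        exact add_le_add (add_le_add e1 e2) (add_le_add e2 e3)
    _ = M * (‖deriv (deriv ω) t‖ + 2 * ‖deriv ω t‖ + ‖ω t‖) := by ring

/-- with `ω` a `C²` function compactly supported in `[0,∞)` and `g` a `C²`
function with `g, g', g''` bounded by `M`, there is `C = C(ω, M)` such that for all `x ≤ 0`,
`∫_ℝ | x ∫_{-1}^1 ∫₀^∞ cos(uλ) e^{-iλxσ} ω(λ) g(λσ) dλ dσ | du ≤ C ⟨x⟩`. -/
theorem stmt_12 (ω : ℝ → ℂ) (hω : ContDiff ℝ 2 ω) (hωc : HasCompactSupport ω)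
    (hωsupp : Function.support ω ⊆ Set.Ici (0 : ℝ)) (M : ℝ) (hM : 0 < M) :
    ∃ C : ℝ, ∀ x : ℝ, x ≤ 0 → ∀ g : ℝ → ℂ, ContDiff ℝ 2 g →
      (∀ μ : ℝ, ‖g μ‖ ≤ M ∧ ‖deriv g μ‖ ≤ M ∧ ‖deriv (deriv g) μ‖ ≤ M) →
      (∫ u : ℝ,
          ‖(x : ℂ) * ∫ σ in (-1 : ℝ)..1, ∫ lam in Set.Ioi (0 : ℝ),
              ((Real.cos (u * lam) : ℝ) : ℂ) *
                Complex.exp (-(Complex.I * (lam : ℂ) * (x : ℂ) * (σ : ℂ))) *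
                  ω lam * g (lam * σ)‖)
        ≤ C * Real.sqrt (1 + x ^ 2) := by
  have hωz : ∀ t : ℝ, t ≤ 0 → ω t = 0 := by
    have hclosed : IsClosed {s : ℝ | ω s = 0} := isClosed_eq hω.continuous continuous_const
    have hIio : Set.Iio (0:ℝ) ⊆ {s : ℝ | ω s = 0} := by
      intro s hs
      by_contra hne
      exact (not_le.2 hs) (Set.mem_Ici.mp (hωsupp hne))
    intro t ht
    have hcl := closure_minimal hIio hclosed
    rw [closure_Iio] at hcl
    exact hcl ht
  have hω1 : ContDiff ℝ 1 (deriv ω) :=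
    (contDiff_succ_iff_deriv.mp (show ContDiff ℝ (1+1) ω by exact_mod_cast hω)).2.2
  have intω : Integrable ω := hω.continuous.integrable_of_hasCompactSupport hωc
  have intω1 : Integrable (deriv ω) :=
    (hω.continuous_deriv one_le_two).integrable_of_hasCompactSupport hωc.deriv
  have intω2 : Integrable (deriv (deriv ω)) :=
    (hω1.continuous_deriv le_rfl).integrable_of_hasCompactSupport hωc.deriv.deriv
  set N0 : ℝ := ∫ t : ℝ, ‖ω t‖ with hN0
  set N1 : ℝ := ∫ t : ℝ, ‖deriv ω t‖ with hN1
  set N2 : ℝ := ∫ t : ℝ, ‖deriv (deriv ω) t‖ with hN2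
  have hN0n : 0 ≤ N0 := integral_nonneg fun t => norm_nonneg _
  have hN1n : 0 ≤ N1 := integral_nonneg fun t => norm_nonneg _
  have hN2n : 0 ≤ N2 := integral_nonneg fun t => norm_nonneg _
  set K : ℝ := M * (2 * N0 + 2 * N1 + N2) with hK
  have hK0 : 0 ≤ K := mul_nonneg hM.le (by linarith)
  refine ⟨2 * Real.pi * K, ?_⟩
  intro x hx g hg hgb
  rcases hx.lt_or_eq with hxlt | hxeq
  swap
  · subst hxeq
    simp only [Complex.ofReal_zero, zero_mul, norm_zero, MeasureTheory.integral_zero]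
    exact mul_nonneg (mul_nonneg (by positivity) hK0) (Real.sqrt_nonneg _)
  -- x < 0 case
  have hfun_cd : ∀ σ : ℝ, ContDiff ℝ 2 (fun t : ℝ => ω t * g (t * σ)) := fun σ =>
    hω.mul (hg.comp (contDiff_id.mul contDiff_const))
  have hfun_cs : ∀ σ : ℝ, HasCompactSupport (fun t : ℝ => ω t * g (t * σ)) := fun σ =>
    hωc.mul_right
  have hfun_cd2 : ∀ σ : ℝ, Continuous (deriv (deriv (fun t : ℝ => ω t * g (t * σ)))) := by
    intro σ
    have h2 : ContDiff ℝ 1 (deriv (fun t : ℝ => ω t * g (t * σ))) :=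
      (contDiff_succ_iff_deriv.mp
        (show ContDiff ℝ (1+1) (fun t : ℝ => ω t * g (t * σ)) by exact_mod_cast hfun_cd σ)).2.2
    exact h2.continuous_deriv le_rfl
  have hKb : ∀ σ : ℝ, |σ| ≤ 1 →
      (∫ t : ℝ, ‖ω t * g (t * σ)‖) +
        (∫ t : ℝ, ‖deriv (deriv (fun t : ℝ => ω t * g (t * σ))) t‖) ≤ K := by
    intro σ hσ
    have int_h : Integrable (fun t : ℝ => ω t * g (t * σ)) :=
      (hfun_cd σ).continuous.integrable_of_hasCompactSupport (hfun_cs σ)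
    have int_h2 : Integrable (deriv (deriv (fun t : ℝ => ω t * g (t * σ)))) :=
      (hfun_cd2 σ).integrable_of_hasCompactSupport (hfun_cs σ).deriv.deriv
    have b1 : (∫ t : ℝ, ‖ω t * g (t * σ)‖) ≤ M * N0 := by
      have step : (∫ t : ℝ, ‖ω t * g (t * σ)‖) ≤ ∫ t : ℝ, M * ‖ω t‖ := by
        refine integral_mono int_h.norm (intω.norm.const_mul M) fun t => ?_
        rw [norm_mul, mul_comm]
        exact mul_le_mul_of_nonneg_right (hgb (t * σ)).1 (norm_nonneg _)
      rwa [MeasureTheory.integral_const_mul] at step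
    have b2 : (∫ t : ℝ, ‖deriv (deriv (fun t : ℝ => ω t * g (t * σ))) t‖)
        ≤ M * (N2 + 2 * N1 + N0) := by
      have intR : Integrable
          (fun t : ℝ => M * (‖deriv (deriv ω) t‖ + 2 * ‖deriv ω t‖ + ‖ω t‖)) :=
        ((intω2.norm.add (intω1.norm.const_mul 2)).add intω.norm).const_mul M
      have step : (∫ t : ℝ, ‖deriv (deriv (fun t : ℝ => ω t * g (t * σ))) t‖)
          ≤ ∫ t : ℝ, M * (‖deriv (deriv ω) t‖ + 2 * ‖deriv ω t‖ + ‖ω t‖) :=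
        integral_mono int_h2.norm intR (deriv2_bound ω g hω hg M σ hσ hM hgb)
      have eq1 : (∫ t : ℝ, M * (‖deriv (deriv ω) t‖ + 2 * ‖deriv ω t‖ + ‖ω t‖))
          = M * (N2 + 2 * N1 + N0) := by
        rw [MeasureTheory.integral_const_mul]
        congr 1
        have ia1 : Integrable (fun t : ℝ => 2 * ‖deriv ω t‖) := intω1.norm.const_mul 2
        have ia2 : Integrable (fun t : ℝ => ‖deriv (deriv ω) t‖ + 2 * ‖deriv ω t‖) :=
          intω2.norm.add ia1
        rw [integral_add ia2 intω.norm, integral_add intω2.norm ia1, MeasureTheory.integral_const_mul]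
      rwa [eq1] at step
    have hsum : M * N0 + M * (N2 + 2 * N1 + N0) = K := by rw [hK]; ring
    linarith
  have inner_bound : ∀ u σ : ℝ, |σ| ≤ 1 →
      ‖∫ lam in Set.Ioi (0:ℝ),
          ((Real.cos (u * lam) : ℝ) : ℂ) *
            Complex.exp (-(Complex.I * (lam : ℂ) * (x : ℂ) * (σ : ℂ))) * ω lam * g (lam * σ)‖
        ≤ K / 2 * ((1 + (u - x * σ) ^ 2)⁻¹ + (1 + (u + x * σ) ^ 2)⁻¹) := by
    intro u σ hσ
    set a1 : ℝ := u - x * σ with ha1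
    set a2 : ℝ := -u - x * σ with ha2
    have hext : (∫ lam in Set.Ioi (0:ℝ),
          ((Real.cos (u * lam) : ℝ) : ℂ) *
            Complex.exp (-(Complex.I * (lam : ℂ) * (x : ℂ) * (σ : ℂ))) * ω lam * g (lam * σ))
        = ∫ lam : ℝ,
          ((Real.cos (u * lam) : ℝ) : ℂ) *
            Complex.exp (-(Complex.I * (lam : ℂ) * (x : ℂ) * (σ : ℂ))) * ω lam * g (lam * σ) := by
      apply setIntegral_eq_integral_of_forall_compl_eq_zero
      intro lam hlam
      rw [hωz lam (not_lt.1 hlam)]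
      ring
    have point : (fun lam : ℝ =>
          ((Real.cos (u * lam) : ℝ) : ℂ) *
            Complex.exp (-(Complex.I * (lam : ℂ) * (x : ℂ) * (σ : ℂ))) * ω lam * g (lam * σ))
        = fun t : ℝ =>
          (1/2 : ℂ) * (Complex.exp (Complex.I * (a1 : ℝ) * t) * (ω t * g (t * σ)))
          + (1/2 : ℂ) * (Complex.exp (Complex.I * (a2 : ℝ) * t) * (ω t * g (t * σ))) := by
      funext t
      have hcos : (Complex.cos ((u : ℂ) * t)) =
          (Complex.exp ((u:ℂ) * t * Complex.I) + Complex.exp (-((u:ℂ) * t) * Complex.I)) / 2 :=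
        rfl
      have m1 : Complex.exp ((u:ℂ) * t * Complex.I) *
            Complex.exp (-(Complex.I * (t : ℂ) * (x : ℂ) * (σ : ℂ)))
          = Complex.exp (Complex.I * (a1 : ℝ) * t) := by
        rw [← Complex.exp_add]
        congr 1
        rw [ha1]; push_cast; ring
      have m2 : Complex.exp (-((u:ℂ) * t) * Complex.I) *
            Complex.exp (-(Complex.I * (t : ℂ) * (x : ℂ) * (σ : ℂ)))
          = Complex.exp (Complex.I * (a2 : ℝ) * t) := by
        rw [← Complex.exp_add]
        congr 1
        rw [ha2]; push_cast; ring
      calc ((Real.cos (u * t) : ℝ) : ℂ) *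
            Complex.exp (-(Complex.I * (t : ℂ) * (x : ℂ) * (σ : ℂ))) * ω t * g (t * σ)
          = Complex.cos ((u:ℂ) * t) *
            Complex.exp (-(Complex.I * (t : ℂ) * (x : ℂ) * (σ : ℂ))) * ω t * g (t * σ) := by
            rw [Complex.ofReal_cos, Complex.ofReal_mul]
        _ = (1/2 : ℂ) * ((Complex.exp ((u:ℂ) * t * Complex.I) *
              Complex.exp (-(Complex.I * (t : ℂ) * (x : ℂ) * (σ : ℂ)))) * (ω t * g (t * σ)))
            + (1/2 : ℂ) * ((Complex.exp (-((u:ℂ) * t) * Complex.I) *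
              Complex.exp (-(Complex.I * (t : ℂ) * (x : ℂ) * (σ : ℂ)))) * (ω t * g (t * σ))) := by
            rw [hcos]; ring
        _ = _ := by rw [m1, m2]
    have int1 : Integrable
        (fun t : ℝ => Complex.exp (Complex.I * (a1 : ℝ) * t) * (ω t * g (t * σ))) := by
      apply Continuous.integrable_of_hasCompactSupport
      · exact (Complex.continuous_exp.comp (by fun_prop)).mul (hfun_cd σ).continuous
      · exact (hfun_cs σ).mul_left
    have int2 : Integrable
        (fun t : ℝ => Complex.exp (Complex.I * (a2 : ℝ) * t) * (ω t * g (t * σ))) := by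
      apply Continuous.integrable_of_hasCompactSupport
      · exact (Complex.continuous_exp.comp (by fun_prop)).mul (hfun_cd σ).continuous
      · exact (hfun_cs σ).mul_left
    rw [hext, point, integral_add (int1.const_mul _) (int2.const_mul _),
      MeasureTheory.integral_const_mul, MeasureTheory.integral_const_mul]
    have o1 : ‖∫ t : ℝ, Complex.exp (Complex.I * (a1:ℝ) * t) * (ω t * g (t * σ))‖
        ≤ K / (1 + a1 ^ 2) := by
      refine (osc_bound _ (hfun_cd σ) (hfun_cs σ) a1).trans ?_
      gcongr
      exact hKb σ hσ
    have o2 : ‖∫ t : ℝ, Complex.exp (Complex.I * (a2:ℝ) * t) * (ω t * g (t * σ))‖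
        ≤ K / (1 + a2 ^ 2) := by
      refine (osc_bound _ (hfun_cd σ) (hfun_cs σ) a2).trans ?_
      gcongr
      exact hKb σ hσ
    have ha2sq : a2 ^ 2 = (u + x * σ) ^ 2 := by rw [ha2]; ring
    calc ‖(1/2 : ℂ) * (∫ t : ℝ, Complex.exp (Complex.I * (a1:ℝ) * t) * (ω t * g (t * σ)))
          + (1/2 : ℂ) * ∫ t : ℝ, Complex.exp (Complex.I * (a2:ℝ) * t) * (ω t * g (t * σ))‖
        ≤ ‖(1/2 : ℂ) * (∫ t : ℝ, Complex.exp (Complex.I * (a1:ℝ) * t) * (ω t * g (t * σ)))‖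
          + ‖(1/2 : ℂ) * ∫ t : ℝ, Complex.exp (Complex.I * (a2:ℝ) * t) * (ω t * g (t * σ))‖ :=
          norm_add_le _ _
      _ = (1/2) * ‖∫ t : ℝ, Complex.exp (Complex.I * (a1:ℝ) * t) * (ω t * g (t * σ))‖
          + (1/2) * ‖∫ t : ℝ, Complex.exp (Complex.I * (a2:ℝ) * t) * (ω t * g (t * σ))‖ := by
          rw [norm_mul, norm_mul]
          norm_num
      _ ≤ (1/2) * (K / (1 + a1 ^ 2)) + (1/2) * (K / (1 + a2 ^ 2)) :=
          add_le_add (mul_le_mul_of_nonneg_left o1 (by norm_num))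
            (mul_le_mul_of_nonneg_left o2 (by norm_num))
      _ = K / 2 * ((1 + (u - x * σ) ^ 2)⁻¹ + (1 + (u + x * σ) ^ 2)⁻¹) := by
          rw [ha2sq, ha1]
          rw [div_eq_mul_inv K (1 + (u - x*σ)^2), div_eq_mul_inv K (1 + (u + x*σ)^2)]
          ring
  -- integrability over u of the translated Cauchy kernels
  have i1 : ∀ σ : ℝ, Integrable (fun u : ℝ => (1 + (u - x * σ) ^ 2)⁻¹) := by
    intro σ
    have := integrable_inv_one_add_sq.comp_sub_right (x * σ)
    simpa using this
  have i2 : ∀ σ : ℝ, Integrable (fun u : ℝ => (1 + (u + x * σ) ^ 2)⁻¹) := by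
    intro σ
    have := integrable_inv_one_add_sq.comp_sub_right (-(x * σ))
    simpa [sub_neg_eq_add] using this
  have p1 : ∀ σ : ℝ, (∫ u : ℝ, (1 + (u - x * σ) ^ 2)⁻¹) = Real.pi := by
    intro σ
    have h := integral_sub_right_eq_self (μ := volume) (fun v : ℝ => (1 + v ^ 2)⁻¹) (x * σ)
    rw [integral_univ_inv_one_add_sq] at h
    exact h
  have p2 : ∀ σ : ℝ, (∫ u : ℝ, (1 + (u + x * σ) ^ 2)⁻¹) = Real.pi := by
    intro σ
    have h := integral_sub_right_eq_self (μ := volume) (fun v : ℝ => (1 + v ^ 2)⁻¹) (-(x * σ))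
    rw [integral_univ_inv_one_add_sq] at h
    simpa [sub_neg_eq_add] using h
  have Bnn : ∀ u σ : ℝ, 0 ≤ K / 2 * ((1 + (u - x * σ) ^ 2)⁻¹ + (1 + (u + x * σ) ^ 2)⁻¹) := by
    intro u σ
    apply mul_nonneg (by linarith)
    positivity
  have innerInt : ∀ σ : ℝ,
      (∫ u : ℝ, K / 2 * ((1 + (u - x * σ) ^ 2)⁻¹ + (1 + (u + x * σ) ^ 2)⁻¹)) = K * Real.pi := by
    intro σ
    rw [MeasureTheory.integral_const_mul, integral_add (i1 σ) (i2 σ), p1 σ, p2 σ]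
    ring
  have contB : Continuous (fun p : ℝ × ℝ =>
      K / 2 * ((1 + (p.1 - x * p.2) ^ 2)⁻¹ + (1 + (p.1 + x * p.2) ^ 2)⁻¹)) := by
    apply continuous_const.mul
    apply Continuous.add
    · exact Continuous.inv₀ (by fun_prop) (fun p => by positivity)
    · exact Continuous.inv₀ (by fun_prop) (fun p => by positivity)
  have prodInt : Integrable (fun p : ℝ × ℝ =>
      K / 2 * ((1 + (p.1 - x * p.2) ^ 2)⁻¹ + (1 + (p.1 + x * p.2) ^ 2)⁻¹))
      (volume.prod (volume.restrict (Set.Ioc (-1:ℝ) 1))) := by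
    rw [integrable_prod_iff' contB.aestronglyMeasurable]
    constructor
    · exact ae_of_all _ fun σ => ((i1 σ).add (i2 σ)).const_mul _
    · have eqfun : (fun σ : ℝ => ∫ u : ℝ,
          ‖K / 2 * ((1 + (u - x * σ) ^ 2)⁻¹ + (1 + (u + x * σ) ^ 2)⁻¹)‖) =
          fun _ : ℝ => K * Real.pi := by
        funext σ
        have : (fun u : ℝ => ‖K / 2 * ((1 + (u - x * σ) ^ 2)⁻¹ + (1 + (u + x * σ) ^ 2)⁻¹)‖)
            = fun u : ℝ => K / 2 * ((1 + (u - x * σ) ^ 2)⁻¹ + (1 + (u + x * σ) ^ 2)⁻¹) := by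
          funext u
          rw [Real.norm_eq_abs, abs_of_nonneg (Bnn u σ)]
        rw [this, innerInt σ]
      rw [eqfun]
      refine integrableOn_const (ne_of_lt ?_)
      exact measure_Ioc_lt_top
  -- pointwise bound on the u-integrand
  have main_bound : ∀ u : ℝ,
      ‖(x : ℂ) * ∫ σ in (-1 : ℝ)..1, ∫ lam in Set.Ioi (0 : ℝ),
          ((Real.cos (u * lam) : ℝ) : ℂ) *
            Complex.exp (-(Complex.I * (lam : ℂ) * (x : ℂ) * (σ : ℂ))) * ω lam * g (lam * σ)‖
        ≤ (-x) * ∫ σ in Set.Ioc (-1:ℝ) 1,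
            K / 2 * ((1 + (u - x * σ) ^ 2)⁻¹ + (1 + (u + x * σ) ^ 2)⁻¹) := by
    intro u
    rw [norm_mul, Complex.norm_real, Real.norm_eq_abs, abs_of_neg hxlt]
    apply mul_le_mul_of_nonneg_left _ (by linarith)
    have hBc : Continuous (fun σ : ℝ =>
        K / 2 * ((1 + (u - x * σ) ^ 2)⁻¹ + (1 + (u + x * σ) ^ 2)⁻¹)) := by
      apply continuous_const.mul
      apply Continuous.add
      · exact Continuous.inv₀ (by fun_prop) (fun σ => by positivity)
      · exact Continuous.inv₀ (by fun_prop) (fun σ => by positivity)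
    have hb := intervalIntegral.norm_integral_le_abs_of_norm_le
      (μ := volume) (a := (-1:ℝ)) (b := (1:ℝ))
      (f := fun σ => ∫ lam in Set.Ioi (0 : ℝ),
          ((Real.cos (u * lam) : ℝ) : ℂ) *
            Complex.exp (-(Complex.I * (lam : ℂ) * (x : ℂ) * (σ : ℂ))) * ω lam * g (lam * σ))
      (g := fun σ => K / 2 * ((1 + (u - x * σ) ^ 2)⁻¹ + (1 + (u + x * σ) ^ 2)⁻¹))
      ?_ (hBc.intervalIntegrable _ _)
    · refine hb.trans ?_
      rw [intervalIntegral.integral_of_le (by norm_num : (-1:ℝ) ≤ 1)]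
      rw [abs_of_nonneg (setIntegral_nonneg measurableSet_Ioc fun σ _ => Bnn u σ)]
    · rw [Set.uIoc_of_le (by norm_num : (-1:ℝ) ≤ 1)]
      refine (ae_restrict_mem measurableSet_Ioc).mono fun σ hσ => ?_
      exact inner_bound u σ (abs_le.2 ⟨hσ.1.le, hσ.2⟩)
  -- finish via Fubini
  have φint : Integrable (fun u : ℝ => (-x) * ∫ σ in Set.Ioc (-1:ℝ) 1,
      K / 2 * ((1 + (u - x * σ) ^ 2)⁻¹ + (1 + (u + x * σ) ^ 2)⁻¹)) :=
    (prodInt.integral_prod_left).const_mul _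
  calc (∫ u : ℝ,
          ‖(x : ℂ) * ∫ σ in (-1 : ℝ)..1, ∫ lam in Set.Ioi (0 : ℝ),
              ((Real.cos (u * lam) : ℝ) : ℂ) *
                Complex.exp (-(Complex.I * (lam : ℂ) * (x : ℂ) * (σ : ℂ))) *
                  ω lam * g (lam * σ)‖)
      ≤ ∫ u : ℝ, (-x) * ∫ σ in Set.Ioc (-1:ℝ) 1,
          K / 2 * ((1 + (u - x * σ) ^ 2)⁻¹ + (1 + (u + x * σ) ^ 2)⁻¹) :=
        integral_mono_of_nonneg (ae_of_all _ fun u => norm_nonneg _) φint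
          (ae_of_all _ main_bound)
    _ = (-x) * ∫ u : ℝ, ∫ σ in Set.Ioc (-1:ℝ) 1,
          K / 2 * ((1 + (u - x * σ) ^ 2)⁻¹ + (1 + (u + x * σ) ^ 2)⁻¹) := MeasureTheory.integral_const_mul _ _
    _ = (-x) * ∫ σ in Set.Ioc (-1:ℝ) 1, ∫ u : ℝ,
          K / 2 * ((1 + (u - x * σ) ^ 2)⁻¹ + (1 + (u + x * σ) ^ 2)⁻¹) := by
        congr 1
        exact integral_integral_swap prodInt
    _ = (-x) * ∫ σ in Set.Ioc (-1:ℝ) 1, K * Real.pi := by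
        congr 1
        exact integral_congr_ae (ae_of_all _ fun σ => innerInt σ)
    _ = (-x) * (2 * (K * Real.pi)) := by
        rw [setIntegral_const, Real.volume_real_Ioc, smul_eq_mul]
        norm_num
    _ ≤ 2 * Real.pi * K * Real.sqrt (1 + x ^ 2) := by
        have hxs : -x ≤ Real.sqrt (1 + x ^ 2) := by
          rw [show -x = |x| from (abs_of_neg hxlt).symm, ← Real.sqrt_sq_eq_abs]
          exact Real.sqrt_le_sqrt (by linarith)
        calc (-x) * (2 * (K * Real.pi)) = 2 * Real.pi * K * (-x) := by ring
          _ ≤ 2 * Real.pi * K * Real.sqrt (1 + x ^ 2) := by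
              apply mul_le_mul_of_nonneg_left hxs
              positivity
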